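/- Let G be a topological group, let L ≤ G be a closed subgroup that is a maximal closed subgroup (i.e., every closed subgroup M with L ≤ M equals L or G), and let Γ ≤ G be a dense subgroup. Equip the coset space G/L with the quotient topology and the natural left G-action. Let R be an equivalence relation on G/L that is Γ-invariant (x R y implies (γx) R (γy) for all γ ∈ Γ) and whose graph {(x,y) : x R y} is closed in (G/L) × (G/L). Then R is either the equality relation or the full relation identifying all points. (In particular the Γ-flow on G/L is prime.) -/

import Mathlib

open Filter Topology

/-- Let `L` be a maximal closed subgroup of a topological group `G` and `Γ ≤ G` a dense
subgroup. Every `Γ`-invariant closed equivalence relation on the coset space `G/L` is either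
equality or the full relation: the `Γ`-flow `G/L` is prime. -/
theorem prime_homogeneous_flow {G : Type*} [Group G] [TopologicalSpace G]
    [IsTopologicalGroup G]
    (L : Subgroup G) (hLc : IsClosed (L : Set G))
    (hLmax : ∀ M : Subgroup G, IsClosed (M : Set G) → L ≤ M → M = L ∨ M = ⊤)
    (Γ : Subgroup G) (hΓ : Dense (Γ : Set G))
    (R : G ⧸ L → G ⧸ L → Prop) (hR : Equivalence R)
    (hinv : ∀ γ ∈ Γ, ∀ x y : G ⧸ L, R x y → R (γ • x) (γ • y))
    (hclosed : IsClosed {p : (G ⧸ L) × (G ⧸ L) | R p.1 p.2}) :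
    (∀ x y : G ⧸ L, R x y ↔ x = y) ∨ (∀ x y : G ⧸ L, R x y) := by
  -- R is invariant under all of G by density of Γ and closedness of the graph
  have hGinv : ∀ g : G, ∀ x y : G ⧸ L, R x y → R (g • x) (g • y) := by
    intro g x y hxy
    have hcont : Continuous fun g : G => ((g • x, g • y) : (G ⧸ L) × (G ⧸ L)) :=
      (continuous_id.smul continuous_const).prodMk (continuous_id.smul continuous_const)
    have hclosed' : IsClosed {g : G | R (g • x) (g • y)} :=
      hclosed.preimage hcont
    have hsub : (Γ : Set G) ⊆ {g : G | R (g • x) (g • y)} := fun γ hγ => hinv γ hγ x y hxy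
    have : (Set.univ : Set G) ⊆ {g : G | R (g • x) (g • y)} := by
      have h1 := hclosed'.closure_subset_iff.mpr hsub
      rwa [hΓ.closure_eq] at h1
    exact this (Set.mem_univ g)
  -- the stabilizer-like subgroup
  set e : G ⧸ L := ((1 : G) : G ⧸ L) with he
  have smul_e : ∀ g : G, g • e = ((g : G) : G ⧸ L) := by
    intro g
    rw [he]
    rw [show ((1 : G) : G ⧸ L) = QuotientGroup.mk (1 : G) from rfl,
      MulAction.Quotient.smul_mk]
    simp
  let M : Subgroup G :=
    { carrier := {g : G | R (g • e) e}
      one_mem' := by simpa using hR.refl e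
      mul_mem' := by
        intro a b ha hb
        have h1 : R ((a * b) • e) (a • e) := by
          have := hGinv a _ _ hb
          simpa [mul_smul] using this
        exact hR.trans h1 ha
      inv_mem' := by
        intro a ha
        have := hGinv a⁻¹ _ _ (hR.symm ha)
        simpa [smul_smul] using this }
  have hMc : IsClosed (M : Set G) := by
    have hcont : Continuous fun g : G => ((g • e, e) : (G ⧸ L) × (G ⧸ L)) :=
      (continuous_id.smul (continuous_const : Continuous fun _ : G => e)).prodMk continuous_const
    exact hclosed.preimage hcont
  have hLM : L ≤ M := by
    intro l hl
    show R (l • e) e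
    have : l • e = e := by
      rw [smul_e]
      exact (QuotientGroup.eq).mpr (by simpa using L.inv_mem hl)
    rw [this]
    exact hR.refl e
  rcases hLmax M hMc hLM with hM | hM
  · left
    intro x y
    constructor
    · intro hxy
      obtain ⟨g, rfl⟩ := QuotientGroup.mk_surjective x
      obtain ⟨h, rfl⟩ := QuotientGroup.mk_surjective y
      have : R ((h⁻¹ * g) • e) e := by
        have := hGinv h⁻¹ _ _ hxy
        rw [smul_e ] at *
        have h1 : h⁻¹ • (g : G ⧸ L) = ((h⁻¹ * g : G) : G ⧸ L) :=
          MulAction.Quotient.smul_mk L h⁻¹ g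
        have h2 : h⁻¹ • (h : G ⧸ L) = ((h⁻¹ * h : G) : G ⧸ L) :=
          MulAction.Quotient.smul_mk L h⁻¹ h
        rw [h1, h2] at this
        simpa [smul_e] using this
      have hmem : h⁻¹ * g ∈ M := this
      rw [hM] at hmem
      exact (QuotientGroup.eq).mpr (by simpa using L.inv_mem hmem)
    · rintro rfl; exact hR.refl x
  · right
    intro x y
    obtain ⟨g, rfl⟩ := QuotientGroup.mk_surjective x
    obtain ⟨h, rfl⟩ := QuotientGroup.mk_surjective y
    have hg : R ((g : G) : G ⧸ L) e := by
      have hm : g ∈ M := by rw [hM]; trivial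
      have : R (g • e) e := hm
      rwa [smul_e] at this
    have hh : R ((h : G) : G ⧸ L) e := by
      have hm : h ∈ M := by rw [hM]; trivial
      have : R (h • e) e := hm
      rwa [smul_e] at this
    exact hR.trans hg (hR.symm hh)
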